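/- arXiv:1906.07205 — 2 statements merged into one kernel-verified Lean document; each statement's English description precedes it below -/
import Mathlib

section
/- Let G be a group and let s_0, s_1, ..., s_n be a finite list of elements of G. The following are equivalent: (1) the consecutive quotients s_0⁻¹s_1, s_1⁻¹s_2, ..., s_{n-1}⁻¹s_n pairwise commute; (2) the subgroup of G generated by all quotients s_i⁻¹s_j (for 0 ≤ i, j ≤ n) is abelian; (3) the set {s_0, ..., s_n} is contained in a single left coset of some abelian subgroup of G. -/
open Pointwise

lemma aux_isComm_of_le {G : Type*} [Group G] {H K : Subgroup G} (hle : H ≤ K)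
    (hK : IsMulCommutative K) : IsMulCommutative H :=
  ⟨⟨fun a b => Subtype.ext <| by
    haveI := hK
    exact Subgroup.mul_comm_of_mem_isMulCommutative K (hle a.2) (hle b.2)⟩⟩

lemma aux_closure_isComm {G : Type*} [Group G] {S : Set G}
    (h : ∀ a ∈ S, ∀ b ∈ S, Commute a b) : IsMulCommutative (Subgroup.closure S) := by
  rw [← Subgroup.le_centralizer_iff_isMulCommutative]
  refine (Subgroup.closure_le _).2 fun a ha => ?_
  refine Subgroup.mem_centralizer_iff.2 fun b hb => ?_
  have h1 : Subgroup.closure S ≤ Subgroup.centralizer {a} :=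
    (Subgroup.closure_le _).2 fun c hc =>
      Subgroup.mem_centralizer_singleton_iff.2 (h a ha c hc).symm
  exact Subgroup.mem_centralizer_singleton_iff.1 (h1 hb)

/-- A set `S` in a group `G` is *affinely commutative* if it is contained in a single
left coset of some abelian subgroup of `G`. -/
def AffinelyCommutative {G : Type*} [Group G] (S : Set G) : Prop :=
  ∃ (g : G) (A : Subgroup G), IsMulCommutative A ∧ S ⊆ g • (A : Set G)

/-- For a finite list `s 0, …, s n` of elements of a group `G`, the following are
equivalent: (1) the consecutive quotients `(s i)⁻¹ * s (i+1)` pairwise commute;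
(2) the subgroup generated by all quotients `(s i)⁻¹ * s j` is abelian;
(3) the set `{s 0, …, s n}` is contained in a single left coset of an abelian subgroup. -/
theorem affinelyCommutative_tfae {G : Type*} [Group G] (n : ℕ) (s : Fin (n + 1) → G) :
    List.TFAE
      [∀ i j : Fin n, Commute ((s i.castSucc)⁻¹ * s i.succ) ((s j.castSucc)⁻¹ * s j.succ),
       IsMulCommutative (Subgroup.closure {x : G | ∃ i j : Fin (n + 1), x = (s i)⁻¹ * s j}),
       ∃ (g : G) (A : Subgroup G), IsMulCommutative A ∧ Set.range s ⊆ g • (A : Set G)] := by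
  tfae_have 1 → 3 := by
    intro h
    set T : Set G := {x : G | ∃ i : Fin n, x = (s i.castSucc)⁻¹ * s i.succ} with hT
    refine ⟨s 0, Subgroup.closure T, aux_closure_isComm ?_, ?_⟩
    · rintro a ⟨i, rfl⟩ b ⟨j, rfl⟩
      exact h i j
    · rintro x ⟨i, rfl⟩
      rw [Set.mem_smul_set]
      refine ⟨(s 0)⁻¹ * s i, ?_, by rw [smul_eq_mul]; group⟩
      induction i using Fin.induction with
      | zero => simpa using (Subgroup.closure T).one_mem
      | succ i ih =>
        have : (s 0)⁻¹ * s i.succ = ((s 0)⁻¹ * s i.castSucc) * ((s i.castSucc)⁻¹ * s i.succ) := by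
          group
        rw [this]
        exact mul_mem ih (Subgroup.subset_closure ⟨i, rfl⟩)
  tfae_have 3 → 2 := by
    rintro ⟨g, A, hA, hsub⟩
    refine aux_isComm_of_le ?_ hA
    rw [Subgroup.closure_le]
    rintro x ⟨i, j, rfl⟩
    obtain ⟨a, ha, hai⟩ := Set.mem_smul_set.1 (hsub ⟨i, rfl⟩)
    obtain ⟨b, hb, hbj⟩ := Set.mem_smul_set.1 (hsub ⟨j, rfl⟩)
    have : (s i)⁻¹ * s j = a⁻¹ * b := by
      rw [← hai, ← hbj, smul_eq_mul, smul_eq_mul]; group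
    rw [SetLike.mem_coe, this]
    exact mul_mem (inv_mem ha) hb
  tfae_have 2 → 1 := by
    intro h i j
    haveI := h
    exact Subgroup.mul_comm_of_mem_isMulCommutative
      (Subgroup.closure {x : G | ∃ i j : Fin (n + 1), x = (s i)⁻¹ * s j})
      (Subgroup.subset_closure ⟨i.castSucc, i.succ, rfl⟩)
      (Subgroup.subset_closure ⟨j.castSucc, j.succ, rfl⟩)
  tfae_finish
end

section
/- Let G be a finite group. A subset S ⊆ G is maximal (with respect to inclusion) among the affinely commutative subsets of G if and only if S is a left coset of a maximal abelian subgroup of G (i.e., an abelian subgroup of G not properly contained in any other abelian subgroup of G). -/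
open Pointwise

/-- In a finite group `G`, a subset `S` is maximal among affinely commutative subsets
if and only if it is a left coset of a maximal abelian subgroup of `G`. -/
theorem maximal_affinelyCommutative_iff_coset_maximal_abelian {G : Type*} [Group G]
    [Finite G] (S : Set G) :
    (AffinelyCommutative S ∧ ∀ T : Set G, AffinelyCommutative T → S ⊆ T → S = T) ↔
    (∃ (g : G) (A : Subgroup G), IsMulCommutative A ∧
      (∀ B : Subgroup G, IsMulCommutative B → A ≤ B → A = B) ∧ S = g • (A : Set G)) := by
  constructor
  · rintro ⟨⟨g, A, hA, hSA⟩, hmax⟩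
    obtain ⟨A', hA'mem, hA'max⟩ := Set.Finite.exists_maximalFor id
      {B : Subgroup G | IsMulCommutative B ∧ A ≤ B} (Set.toFinite _) ⟨A, hA, le_rfl⟩
    refine ⟨g, A', hA'mem.1, ?_, ?_⟩
    · intro B hB hAB
      exact le_antisymm hAB (hA'max ⟨hB, hA'mem.2.trans hAB⟩ hAB)
    · exact hmax _ ⟨g, A', hA'mem.1, subset_rfl⟩
        (hSA.trans (Set.smul_set_mono (SetLike.coe_subset_coe.mpr hA'mem.2)))
  · rintro ⟨g, A, hA, hAmax, rfl⟩
    have hg : g ∈ g • (A : Set G) := ⟨1, A.one_mem, mul_one g⟩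
    refine ⟨⟨g, A, hA, subset_rfl⟩, ?_⟩
    rintro T ⟨h, B, hB, hTB⟩ hST
    have hhg : h⁻¹ * g ∈ B := by
      have := hTB (hST hg)
      rwa [Set.mem_smul_set_iff_inv_smul_mem, smul_eq_mul] at this
    have hAB : A ≤ B := by
      intro a ha
      have h1 : g • a ∈ g • (A : Set G) := Set.smul_mem_smul_set ha
      have h2 := hTB (hST h1)
      rw [Set.mem_smul_set_iff_inv_smul_mem, smul_eq_mul, smul_eq_mul] at h2
      have := B.mul_mem (B.inv_mem hhg) h2
      simpa [mul_assoc] using this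
    have hABeq := hAmax B hB hAB
    apply Set.Subset.antisymm hST
    intro x hx
    have hx' := hTB hx
    rw [Set.mem_smul_set_iff_inv_smul_mem, smul_eq_mul] at hx'
    rw [Set.mem_smul_set_iff_inv_smul_mem, smul_eq_mul, hABeq]
    have := B.mul_mem (B.inv_mem hhg) hx'
    simpa [mul_assoc] using this
end
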